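/- Let Y ⊆ ℝ^m be a convex set, D ⊆ ℝ^m a nonempty set, U ⊆ ℝ^n a set, and θ_i = [G_i w_i] with G_i ∈ ℝ^{m×n}, w_i ∈ ℝ^m for i = 1,…,N. Define the tightened set X = {u ∈ U | G_i u + w_i ∈ Y ⊖ D for all i = 1,…,N}. If [G w] lies in the convex hull of {θ_1,…,θ_N}, then every u ∈ X satisfies u ∈ U and G u + w + d ∈ Y for all d ∈ D. -/

import Mathlib

open Matrix Finset

/-- Weighted inner product ⟨x,y⟩_W = xᵀWy. -/
noncomputable def wip {n : ℕ} (W : Matrix (Fin n) (Fin n) ℝ) (x y : Fin n → ℝ) : ℝ :=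
  x ⬝ᵥ W.mulVec y

/-- Weighted norm ‖x‖_W = √(xᵀWx). -/
noncomputable def wnorm {n : ℕ} (W : Matrix (Fin n) (Fin n) ℝ) (x : Fin n → ℝ) : ℝ :=
  Real.sqrt (x ⬝ᵥ W.mulVec x)

/-- Euclidean norm ‖x‖ = √(xᵀx). -/
noncomputable def enorm' {n : ℕ} (x : Fin n → ℝ) : ℝ := Real.sqrt (x ⬝ᵥ x)

/-- Operator 2-norm of a matrix. -/
noncomputable def opNorm {m n : ℕ} (A : Matrix (Fin m) (Fin n) ℝ) : ℝ :=
  ‖LinearMap.toContinuousLinearMap (Matrix.toEuclideanLin A)‖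

/-- Lemma 1, constraint tightening: if [G w] lies in the convex hull of the
vertices [Gᵢ wᵢ], then membership in the tightened set
X = {u ∈ U | Gᵢu + wᵢ ∈ Y ⊖ D ∀i} implies u ∈ U and Gu + w + d ∈ Y for all d ∈ D,
where Y ⊖ D = {y ∈ Y | y + d ∈ Y ∀ d ∈ D}. -/
theorem constraint_tightening {m n N : ℕ}
    (Y : Set (Fin m → ℝ)) (hYconv : Convex ℝ Y)
    (D : Set (Fin m → ℝ)) (hD : D.Nonempty)
    (U : Set (Fin n → ℝ))
    (G : Fin N → Matrix (Fin m) (Fin n) ℝ) (w : Fin N → Fin m → ℝ)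
    (G₀ : Matrix (Fin m) (Fin n) ℝ) (w₀ : Fin m → ℝ)
    (lam : Fin N → ℝ) (hlam : ∀ i, 0 ≤ lam i) (hsum : ∑ i, lam i = 1)
    (hG : G₀ = ∑ i, lam i • G i) (hw : w₀ = ∑ i, lam i • w i)
    (u : Fin n → ℝ)
    (hu : u ∈ {u ∈ U | ∀ i, (G i).mulVec u + w i ∈ {y ∈ Y | ∀ d ∈ D, y + d ∈ Y}}) :
    u ∈ U ∧ ∀ d ∈ D, G₀.mulVec u + w₀ + d ∈ Y := by
  obtain ⟨hU, hX⟩ := hu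
  refine ⟨hU, fun d hd => ?_⟩
  have key : G₀.mulVec u + w₀ + d = ∑ i, lam i • ((G i).mulVec u + w i + d) := by
    subst hG hw
    simp only [smul_add, Finset.sum_add_distrib]
    congr 1
    congr 1
    · induction (Finset.univ : Finset (Fin N)) using Finset.induction with
      | empty => simp [Matrix.mulVec]
      | insert a s h ih =>
        simp [Finset.sum_insert h, Matrix.add_mulVec, Matrix.smul_mulVec, ih]
    · rw [← Finset.sum_smul, hsum, one_smul]
  rw [key]
  exact hYconv.sum_mem (fun i _ => hlam i) hsum (fun i _ => (hX i).2 d hd)
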